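/- If (Ω, 𝒜, μ) is a finite measure space, {𝒜ₙ} a sequence of σ-subalgebras of 𝒜, and 𝒜_μ := {A ∈ 𝒜 : ∃ Aₙ ∈ 𝒜ₙ with μ(Aₙ Δ A) → 0}, then 𝒜_μ is a σ-subalgebra of 𝒜. -/
import Mathlib

open MeasureTheory Filter Topology

private lemma diag_aux {g : ℕ → ℕ → ENNReal}
    (h : ∀ k : ℕ, ∃ m N, ∀ n ≥ N, g m n ≤ ((k : ENNReal) + 1)⁻¹) :
    ∃ φ : ℕ → ℕ, Tendsto (fun n => g (φ n) n) atTop (𝓝 0) := by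
  choose m N hmN using h
  set N' : ℕ → ℕ := fun k => (Finset.range (k + 1)).sup N + k with hN'
  have hNle : ∀ k, N k ≤ N' k := fun k =>
    le_trans (Finset.le_sup (Finset.mem_range.2 (Nat.lt_succ_self k))) (Nat.le_add_right _ _)
  have hkle : ∀ k, k ≤ N' k := fun k => Nat.le_add_left k _
  refine ⟨fun n => m (Nat.findGreatest (fun j => N' j ≤ n) n), ?_⟩
  rw [ENNReal.tendsto_atTop_zero]
  intro ε hε
  obtain ⟨k, hk⟩ := ENNReal.exists_inv_nat_lt hε.ne'
  refine ⟨N' k, fun n hn => ?_⟩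
  set k' := Nat.findGreatest (fun j => N' j ≤ n) n with hk'
  have hkn : k ≤ n := le_trans (hkle k) hn
  have h1 : k ≤ k' := Nat.le_findGreatest hkn hn
  have h2 : N' k' ≤ n := Nat.findGreatest_spec (P := fun j => N' j ≤ n) (n := n) hkn hn
  calc g (m k') n ≤ ((k' : ENNReal) + 1)⁻¹ := hmN k' n (le_trans (hNle k') h2)
    _ ≤ ((k : ENNReal))⁻¹ := by
        apply ENNReal.inv_le_inv.2
        have : (k : ENNReal) ≤ (k' : ENNReal) := by exact_mod_cast h1
        exact le_trans this (le_add_of_nonneg_right zero_le_one)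
    _ ≤ ε := hk.le

theorem stmt_0 {Ω : Type*} {m0 : MeasurableSpace Ω} (μ : Measure Ω) [IsFiniteMeasure μ]
    (𝒜 : ℕ → MeasurableSpace Ω) (h𝒜 : ∀ n, 𝒜 n ≤ m0)
    (Aμ : Set (Set Ω))
    (hAμ : Aμ = {A : Set Ω | MeasurableSet A ∧ ∃ As : ℕ → Set Ω,
      (∀ n, MeasurableSet[𝒜 n] (As n)) ∧
      Tendsto (fun n => μ (symmDiff (As n) A)) atTop (𝓝 0)}) :
    (∅ ∈ Aμ) ∧ (∀ A ∈ Aμ, Aᶜ ∈ Aμ) ∧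
      (∀ f : ℕ → Set Ω, (∀ i, f i ∈ Aμ) → (⋃ i, f i) ∈ Aμ) := by
  subst hAμ
  refine ⟨⟨MeasurableSet.empty, fun _ => ∅, fun n => @MeasurableSet.empty _ (𝒜 n), ?_⟩, ?_, ?_⟩
  · simpa using tendsto_const_nhds
  · rintro A ⟨hA, As, hAs, hT⟩
    refine ⟨hA.compl, fun n => (As n)ᶜ, fun n => (hAs n).compl, ?_⟩
    simpa only [compl_symmDiff_compl] using hT
  · rintro f hf
    choose hfm As hAsm hAst using fun i => hf i
    set A : Set Ω := ⋃ i, f i with hA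
    have hAmeas : MeasurableSet A := MeasurableSet.iUnion hfm
    set S : ℕ → Set Ω := fun K => ⋃ i ∈ Finset.range K, f i with hS
    have hdiag : ∀ k : ℕ, ∃ K N, ∀ n ≥ N,
        μ (symmDiff (⋃ i ∈ Finset.range K, As i n) A) ≤ ((k : ENNReal) + 1)⁻¹ := by
      intro k
      set ε : ENNReal := ((k : ENNReal) + 1)⁻¹ with hε
      have hεne : ε ≠ 0 := ENNReal.inv_ne_zero.2 (by simp)
      have hε0 : 0 < ε / 2 := ENNReal.div_pos hεne ENNReal.ofNat_ne_top
      -- continuity from above: μ (A \ S K) → 0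
      have hmono : Monotone S := fun a b hab =>
        Set.biUnion_subset_biUnion_left (Finset.range_subset_range.2 hab)
      have hUS : ⋃ K, S K = A := by
        apply Set.Subset.antisymm
        · exact Set.iUnion_subset fun K => Set.iUnion₂_subset fun i _ => Set.subset_iUnion f i
        · exact Set.iUnion_subset fun i =>
            Set.subset_iUnion_of_subset (i + 1)
              (Set.subset_biUnion_of_mem (Finset.mem_range.2 (Nat.lt_succ_self i)))
      have hSm : ∀ K, MeasurableSet (S K) := fun K =>
        (Finset.range K).measurableSet_biUnion fun i _ => hfm i
      have htend : Tendsto (fun K => μ (A \ S K)) atTop (𝓝 (μ (⋂ K, A \ S K))) :=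
        tendsto_measure_iInter_atTop
          (fun K => (hAmeas.diff (hSm K)).nullMeasurableSet)
          (fun a b hab => Set.diff_subset_diff_right (hmono hab))
          ⟨0, measure_ne_top μ _⟩
      have hIempty : (⋂ K, A \ S K) = ∅ := by
        rw [← Set.diff_iUnion, hUS, Set.diff_self]
      rw [hIempty, measure_empty] at htend
      obtain ⟨K, hK⟩ := (ENNReal.tendsto_atTop_zero.1 htend) (ε / 2) hε0
      have hKbound : μ (A \ S K) ≤ ε / 2 := hK K le_rfl
      -- finite sum of symmDiffs tends to 0
      have hsum : Tendsto (fun n => ∑ i ∈ Finset.range K, μ (symmDiff (As i n) (f i)))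
          atTop (𝓝 0) := by
        have := tendsto_finset_sum (Finset.range K)
          (fun i _ => hAst i)
        simpa using this
      obtain ⟨N, hN⟩ := (ENNReal.tendsto_atTop_zero.1 hsum) (ε / 2) hε0
      refine ⟨K, N, fun n hn => ?_⟩
      have hsub : symmDiff (⋃ i ∈ Finset.range K, As i n) (S K) ⊆
          ⋃ i ∈ Finset.range K, symmDiff (As i n) (f i) := by
        intro x hx
        rw [Set.mem_symmDiff] at hx
        simp only [hS, Set.mem_iUnion, Set.mem_symmDiff, exists_prop, not_exists,
          not_and] at hx ⊢
        rcases hx with ⟨⟨i, hi, hxi⟩, hx2⟩ | ⟨⟨i, hi, hxi⟩, hx2⟩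
        · exact ⟨i, hi, Or.inl ⟨hxi, hx2 i hi⟩⟩
        · exact ⟨i, hi, Or.inr ⟨hxi, hx2 i hi⟩⟩
      have hSA : symmDiff (S K) A = A \ S K := by
        rw [symmDiff_of_le]
        rw [hUS.symm]
        exact Set.subset_iUnion S K
      calc μ (symmDiff (⋃ i ∈ Finset.range K, As i n) A)
          ≤ μ (symmDiff (⋃ i ∈ Finset.range K, As i n) (S K)) + μ (symmDiff (S K) A) :=
            measure_symmDiff_le _ _ _
        _ ≤ (∑ i ∈ Finset.range K, μ (symmDiff (As i n) (f i))) + μ (A \ S K) := by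
            gcongr
            · exact le_trans (measure_mono hsub) (measure_biUnion_finset_le _ _)
            · rw [hSA]
        _ ≤ ε / 2 + ε / 2 := add_le_add (hN n hn) hKbound
        _ = ε := ENNReal.add_halves ε
    obtain ⟨φ, hφ⟩ := diag_aux hdiag
    refine ⟨hAmeas, fun n => ⋃ i ∈ Finset.range (φ n), As i n, fun n =>
      (Finset.range (φ n)).measurableSet_biUnion fun i _ => hAsm i n, hφ⟩
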